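/- Let G be a biconnected loopless multigraph which is not isomorphic to K_2. Then the Kirchhoff polynomial Ψ_G is irreducible over Q and is non-constant in every edge variable. -/

import Mathlib

/-- A multigraph: each edge `e` has endpoints `fst e` and `snd e`. -/
structure Multigraph (V : Type) (E : Type) where
  fst : E → V
  snd : E → V

namespace Multigraph

variable {V E V' E' W : Type}

/-- Adjacency using only edges in the set `S`. -/
def Adj (G : Multigraph V E) (S : Set E) (u v : V) : Prop :=
  ∃ e ∈ S, (G.fst e = u ∧ G.snd e = v) ∨ (G.fst e = v ∧ G.snd e = u)

/-- All vertices are connected using edges from `S`. -/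
def ConnOn (G : Multigraph V E) (S : Set E) : Prop :=
  ∀ u v : V, Relation.ReflTransGen (G.Adj S) u v

/-- The multigraph is connected. -/
def ConnectedGraph (G : Multigraph V E) : Prop := G.ConnOn Set.univ

/-- A spanning tree: a minimally spanning-connected edge set. -/
def IsSpanningTree (G : Multigraph V E) [DecidableEq E] (T : Finset E) : Prop :=
  G.ConnOn ↑T ∧ ∀ e ∈ T, ¬ G.ConnOn ↑(T.erase e)

open Classical in
/-- The Kirchhoff polynomial `Ψ_G = ∑_{T spanning tree} ∏_{e ∉ T} t_e`. -/
noncomputable def kirchhoff (G : Multigraph V E) [Fintype E] [DecidableEq E] :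
    MvPolynomial E ℚ :=
  ∑ T : Finset E, if G.IsSpanningTree T then ∏ e ∈ Tᶜ, MvPolynomial.X e else 0

/-- Deletion of the edge `e`. -/
def delete (G : Multigraph V E) (e : E) : Multigraph V {e' : E // e' ≠ e} :=
  ⟨fun e' => G.fst e'.1, fun e' => G.snd e'.1⟩

/-- Contraction of the edge `e` (its two endpoints get identified). -/
def contract (G : Multigraph V E) (e : E) :
    Multigraph (Quot fun a b : V => a = G.fst e ∧ b = G.snd e) {e' : E // e' ≠ e} :=
  ⟨fun e' => Quot.mk _ (G.fst e'.1), fun e' => Quot.mk _ (G.snd e'.1)⟩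

/-- Identify the two vertices `a` and `b`. -/
def identify (G : Multigraph V E) (a b : V) :
    Multigraph (Quot fun x y : V => x = a ∧ y = b) E :=
  ⟨fun e => Quot.mk _ (G.fst e), fun e => Quot.mk _ (G.snd e)⟩

/-- A self-loop. -/
def IsLoop (G : Multigraph V E) (e : E) : Prop := G.fst e = G.snd e

/-- A bridge: deleting `e` disconnects the graph. -/
def IsBridge (G : Multigraph V E) (e : E) : Prop := ¬ G.ConnOn {e' | e' ≠ e}

/-- The whole graph is a tree (its full edge set is a spanning tree). -/
def IsTreeGraph (G : Multigraph V E) [Fintype E] [DecidableEq E] : Prop := G.IsSpanningTree Finset.univ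

/-- A regular edge: not a bridge, not a self-loop, and deleting it does not leave a tree. -/
def IsRegular (G : Multigraph V E) [Fintype E] [DecidableEq E] (e : E) : Prop :=
  ¬ G.IsBridge e ∧ ¬ G.IsLoop e ∧ ¬ (G.delete e).IsTreeGraph

/-- The Jacobian ideal of a polynomial: the ideal generated by its partial derivatives. -/
noncomputable def jacobianIdeal {σ : Type} (f : MvPolynomial σ ℚ) :
    Ideal (MvPolynomial σ ℚ) :=
  Ideal.span (Set.range fun i : σ => MvPolynomial.pderiv i f)

/-- Aluffi's Condition 1 for the pair `(G, e)`: `Ψ_G` lies in the Jacobian ideal of `Ψ_{G∖e}`. -/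
def Cond1 (G : Multigraph V E) [Fintype E] [DecidableEq E] (e : E) : Prop :=
  G.kirchhoff ∈
    jacobianIdeal (MvPolynomial.rename (Subtype.val : {e' : E // e' ≠ e} → E)
      (G.delete e).kirchhoff)

end Multigraph

namespace Multigraph

variable {V E : Type}

/-- Biconnected: connected and removing any single vertex keeps it connected. -/
def Biconnected (G : Multigraph V E) : Prop :=
  G.ConnectedGraph ∧ ∀ v u w : V, u ≠ v → w ≠ v →
    Relation.ReflTransGen (fun a b => a ≠ v ∧ b ≠ v ∧ G.Adj Set.univ a b) u w

/-- The subgraph induced by an edge set `B`, on the vertices met by `B`. -/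
def restrict (G : Multigraph V E) (B : Finset E) :
    Multigraph {v : V // ∃ e ∈ B, G.fst e = v ∨ G.snd e = v} {e : E // e ∈ B} :=
  ⟨fun e => ⟨G.fst e.1, e.1, e.2, Or.inl rfl⟩, fun e => ⟨G.snd e.1, e.1, e.2, Or.inr rfl⟩⟩

/-- A block (biconnected component): a maximal nonempty edge set inducing a
biconnected subgraph. -/
def IsBlock (G : Multigraph V E) (B : Finset E) : Prop :=
  B.Nonempty ∧ (G.restrict B).Biconnected ∧
    ∀ B' : Finset E, B ⊆ B' → (G.restrict B').Biconnected → B' = B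

/-- The set of vertices met by an edge set `S`. -/
def vsupp (G : Multigraph V E) (S : Set E) : Set V :=
  {v : V | ∃ e ∈ S, G.fst e = v ∨ G.snd e = v}

end Multigraph

namespace Multigraph

open Relation MvPolynomial

variable {V E : Type} {G : Multigraph V E}

lemma adj_symm {S : Set E} {u v : V} (h : G.Adj S u v) : G.Adj S v u := by
  obtain ⟨e, he, h | h⟩ := h
  · exact ⟨e, he, Or.inr h⟩
  · exact ⟨e, he, Or.inl h⟩

lemma conn_symm {S : Set E} {u v : V} (h : ReflTransGen (G.Adj S) u v) :
    ReflTransGen (G.Adj S) v u :=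
  (@ReflTransGen.stdSymm _ _ ⟨fun _ _ h => adj_symm h⟩).symm _ _ h

lemma conn_mono {S S' : Set E} (hss : S ⊆ S') {u v : V}
    (h : ReflTransGen (G.Adj S) u v) : ReflTransGen (G.Adj S') u v := by
  refine ReflTransGen.mono ?_ _ _ h
  rintro a b ⟨e, he, hh⟩
  exact ⟨e, hss he, hh⟩

lemma sides {S : Set E} {e : E} {w u : V} (h : ReflTransGen (G.Adj S) w u)
    (hu : u = G.fst e ∨ u = G.snd e) :
    ReflTransGen (G.Adj (S \ {e})) w (G.fst e) ∨
      ReflTransGen (G.Adj (S \ {e})) w (G.snd e) := by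
  induction h using ReflTransGen.head_induction_on with
  | refl =>
    rcases hu with h | h
    · exact Or.inl (h ▸ ReflTransGen.refl)
    · exact Or.inr (h ▸ ReflTransGen.refl)
  | head hstep _ ih =>
    obtain ⟨f, hf, hends⟩ := hstep
    by_cases hfe : f = e
    · subst hfe
      rcases hends with ⟨h1, h2⟩ | ⟨h1, h2⟩
      · exact Or.inl (by rw [h1])
      · exact Or.inr (by rw [h2])
    · rcases ih with ih | ih
      · exact Or.inl (ReflTransGen.head ⟨f, ⟨hf, hfe⟩, hends⟩ ih)
      · exact Or.inr (ReflTransGen.head ⟨f, ⟨hf, hfe⟩, hends⟩ ih)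

lemma isolated {S : Set E} {v x : V} (hv : ∀ e ∈ S, G.fst e ≠ v ∧ G.snd e ≠ v)
    (h : ReflTransGen (G.Adj S) v x) : v = x := by
  induction h with
  | refl => rfl
  | tail hwb hstep ih =>
    exfalso
    obtain ⟨e, he, hends⟩ := hstep
    rcases hends with ⟨h1, h2⟩ | ⟨h1, h2⟩
    · exact (hv e he).1 (h1.trans ih.symm)
    · exact (hv e he).2 (h2.trans ih.symm)

lemma collapse {S : Set E} {c : E} {v w x y : V} (hvw : v ≠ w)
    (hc : (G.fst c = v ∧ G.snd c = w) ∨ (G.fst c = w ∧ G.snd c = v))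
    (hS : ∀ e ∈ S, G.fst e ≠ v ∧ G.snd e ≠ v)
    (h : ReflTransGen (G.Adj (insert c S)) x y) (hx : x ≠ v) (hy : y ≠ v) :
    ReflTransGen (G.Adj S) x y := by
  classical
  let f : V → V := fun z => if z = v then w else z
  have hval : ∀ z : V, z = v ∨ z = w → f z = w := by
    rintro z (rfl | rfl) <;> simp [f]
  have key : ∀ {p q : V}, ReflTransGen (G.Adj (insert c S)) p q →
      ReflTransGen (G.Adj S) (f p) (f q) := by
    intro p q h
    induction h with
    | refl => exact ReflTransGen.refl
    | @tail b q hpb hstep ih =>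
      obtain ⟨e, he, hends⟩ := hstep
      rcases Set.mem_insert_iff.mp he with rfl | heS
      · have hb : b = v ∨ b = w := by
          rcases hc with ⟨h1, h2⟩ | ⟨h1, h2⟩ <;> rcases hends with ⟨h3, h4⟩ | ⟨h3, h4⟩
          · exact Or.inl (h3.symm.trans h1)
          · exact Or.inr (h4.symm.trans h2)
          · exact Or.inr (h3.symm.trans h1)
          · exact Or.inl (h4.symm.trans h2)
        have hq : q = v ∨ q = w := by
          rcases hc with ⟨h1, h2⟩ | ⟨h1, h2⟩ <;> rcases hends with ⟨h3, h4⟩ | ⟨h3, h4⟩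
          · exact Or.inr (h4.symm.trans h2)
          · exact Or.inl (h3.symm.trans h1)
          · exact Or.inl (h4.symm.trans h2)
          · exact Or.inr (h3.symm.trans h1)
        have : f b = f q := (hval b hb).trans (hval q hq).symm
        exact this ▸ ih
      · have hbv : b ≠ v := by
          rcases hends with ⟨h3, h4⟩ | ⟨h3, h4⟩
          · exact fun hc' => (hS e heS).1 (h3.trans hc')
          · exact fun hc' => (hS e heS).2 (h4.trans hc')
        have hqv : q ≠ v := by
          rcases hends with ⟨h3, h4⟩ | ⟨h3, h4⟩
          · exact fun hc' => (hS e heS).2 (h4.trans hc')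
          · exact fun hc' => (hS e heS).1 (h3.trans hc')
        have hstep' : G.Adj S (f b) (f q) := by
          have : G.Adj S b q := ⟨e, heS, hends⟩
          simpa [f, hbv, hqv] using this
        exact ih.tail hstep'
  have := key h
  simpa [f, hx, hy] using this

lemma subst_edge {S : Set E} {c : E}
    (hc : ReflTransGen (G.Adj S) (G.fst c) (G.snd c)) {x y : V}
    (h : ReflTransGen (G.Adj (insert c S)) x y) : ReflTransGen (G.Adj S) x y := by
  induction h with
  | refl => exact ReflTransGen.refl
  | @tail b q hpb hstep ih =>
    obtain ⟨e, he, hends⟩ := hstep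
    rcases Set.mem_insert_iff.mp he with rfl | heS
    · rcases hends with ⟨h1, h2⟩ | ⟨h1, h2⟩
      · exact ih.trans (h1 ▸ h2 ▸ hc)
      · exact ih.trans (conn_symm (h1 ▸ h2 ▸ hc))
    · exact ih.tail ⟨e, heS, hends⟩

lemma exists_tree [DecidableEq E] :
    ∀ S : Finset E, G.ConnOn ↑S → ∃ T ⊆ S, G.IsSpanningTree T := by
  intro S
  induction S using Finset.strongInduction with
  | _ S ih =>
    intro h
    by_cases hS : ∃ e ∈ S, G.ConnOn ↑(S.erase e)
    · obtain ⟨e, he, hce⟩ := hS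
      obtain ⟨T, hT1, hT2⟩ := ih (S.erase e) (Finset.erase_ssubset he) hce
      exact ⟨T, hT1.trans (Finset.erase_subset _ _), hT2⟩
    · push_neg at hS
      exact ⟨S, Finset.Subset.refl S, h, hS⟩

lemma tree_sep [DecidableEq E] {T : Finset E} (hT : G.IsSpanningTree T)
    {x : E} (hx : x ∈ T) :
    ¬ ReflTransGen (G.Adj (↑T \ {x})) (G.fst x) (G.snd x) := by
  intro hcon
  refine hT.2 x hx ?_
  intro p q
  rw [Finset.coe_erase]
  have hp := sides (G := G) (e := x) (hT.1 p (G.fst x)) (Or.inl rfl)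
  have hq := sides (G := G) (e := x) (hT.1 q (G.fst x)) (Or.inl rfl)
  rcases hp with hp | hp <;> rcases hq with hq | hq
  · exact hp.trans (conn_symm hq)
  · exact hp.trans (hcon.trans (conn_symm hq))
  · exact hp.trans ((conn_symm hcon).trans (conn_symm hq))
  · exact hp.trans (conn_symm hq)

end Multigraph
namespace Multigraph

open Relation MvPolynomial

variable {V E : Type} {G : Multigraph V E}

lemma not_bridge [Fintype E] (hbi : G.Biconnected) (hloopless : ∀ e : E, ¬ G.IsLoop e)
    (hcard : 1 < Fintype.card E) (e : E) : G.ConnOn {e' : E | e' ≠ e} := by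
  classical
  set S : Set E := {e' : E | e' ≠ e} with hSdef
  have huniv : (Set.univ \ {e} : Set E) = S := by
    ext g; simp [hSdef]
  have hne : G.fst e ≠ G.snd e := hloopless e
  have havoid : ∀ (cv : V), (G.fst e = cv ∨ G.snd e = cv) → ∀ {x y : V},
      ReflTransGen (fun p q => p ≠ cv ∧ q ≠ cv ∧ G.Adj Set.univ p q) x y →
      ReflTransGen (G.Adj S) x y := by
    intro cv hcv x y h
    refine ReflTransGen.mono ?_ _ _ h
    rintro p q ⟨hp, hq, g, -, hg⟩
    refine ⟨g, ?_, hg⟩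
    intro hge
    subst hge
    rcases hcv with h1 | h1 <;> rcases hg with ⟨h2, h3⟩ | ⟨h2, h3⟩
    · exact hp (h2.symm.trans h1)
    · exact hq (h2.symm.trans h1)
    · exact hq (h3.symm.trans h1)
    · exact hp (h3.symm.trans h1)
  have key : ReflTransGen (G.Adj S) (G.fst e) (G.snd e) := by
    by_contra hnc
    obtain ⟨f, hf⟩ := Fintype.exists_ne_of_one_lt_card hcard e
    have hfS : f ∈ S := hf
    have hSstep : ReflTransGen (G.Adj S) (G.fst f) (G.snd f) :=
      ReflTransGen.single ⟨f, hfS, Or.inl ⟨rfl, rfl⟩⟩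
    have hsides : ∀ x : V, ReflTransGen (G.Adj S) x (G.fst e) ∨
        ReflTransGen (G.Adj S) x (G.snd e) := by
      intro x
      have := sides (G := G) (e := e) (hbi.1 x (G.fst e)) (Or.inl rfl)
      rwa [huniv] at this
    have reach : ∀ p : V, p ≠ G.fst e → ReflTransGen (G.Adj S) p (G.fst e) → False := by
      intro p hp hpu
      have hch := hbi.2 (G.fst e) (G.snd e) p hne.symm hp
      have : ReflTransGen (G.Adj S) (G.snd e) p := havoid (G.fst e) (Or.inl rfl) hch
      exact hnc (conn_symm (this.trans hpu))
    have reach' : ∀ p : V, p ≠ G.snd e → ReflTransGen (G.Adj S) p (G.snd e) → False := by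
      intro p hp hpv
      have hch := hbi.2 (G.snd e) (G.fst e) p hne hp
      have : ReflTransGen (G.Adj S) (G.fst e) p := havoid (G.snd e) (Or.inr rfl) hch
      exact hnc (this.trans hpv)
    rcases hsides (G.fst f) with h | h
    · by_cases hp : G.fst f = G.fst e
      · by_cases hq : G.snd f = G.fst e
        · exact hloopless f (hp.trans hq.symm)
        · exact reach _ hq (hp ▸ conn_symm hSstep)
      · exact reach _ hp h
    · by_cases hp : G.fst f = G.snd e
      · by_cases hq : G.snd f = G.snd e
        · exact hloopless f (hp.trans hq.symm)
        · exact reach' _ hq (hp ▸ conn_symm hSstep)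
      · exact reach' _ hp h
  intro x y
  have hchain := hbi.1 x y
  have hins : (Set.univ : Set E) = insert e S := by
    ext g
    simp only [Set.mem_univ, Set.mem_insert_iff, hSdef, Set.mem_setOf_eq, true_iff]
    exact (em (g = e)).imp id fun h => h
  rw [hins] at hchain
  exact subst_edge key hchain

lemma exists_mixed [DecidableEq E] (hconn : G.ConnectedGraph) {A : Finset E}
    {a0 b0 : E} (ha0 : a0 ∈ A) (hb0 : b0 ∉ A) :
    ∃ (v : V) (a b : E), a ∈ A ∧ b ∉ A ∧ (G.fst a = v ∨ G.snd a = v) ∧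
      (G.fst b = v ∨ G.snd b = v) := by
  by_cases hmix : ∃ (v : V), (∃ a ∈ A, G.fst a = v ∨ G.snd a = v) ∧
      ∃ b, b ∉ A ∧ (G.fst b = v ∨ G.snd b = v)
  · obtain ⟨v, ⟨a, ha, hav⟩, b, hb, hbv⟩ := hmix
    exact ⟨v, a, b, ha, hb, hav, hbv⟩
  · exfalso
    push_neg at hmix
    have hprop : ∀ {x y : V}, ReflTransGen (G.Adj Set.univ) x y →
        (∃ a ∈ A, G.fst a = x ∨ G.snd a = x) → (∃ a ∈ A, G.fst a = y ∨ G.snd a = y) := by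
      intro x y h hx
      induction h with
      | refl => exact hx
      | @tail b q hxb hstep ih =>
        have hAb := ih
        obtain ⟨g, -, hends⟩ := hstep
        by_cases hgA : g ∈ A
        · rcases hends with ⟨h1, h2⟩ | ⟨h1, h2⟩
          · exact ⟨g, hgA, Or.inr h2⟩
          · exact ⟨g, hgA, Or.inl h1⟩
        · exfalso
          have hpair := hmix b hAb g hgA
          rcases hends with ⟨h1, h2⟩ | ⟨h1, h2⟩
          · exact hpair.1 h1
          · exact hpair.2 h2
    have hBend := hprop (hconn (G.fst a0) (G.fst b0)) ⟨a0, ha0, Or.inl rfl⟩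
    exact (hmix (G.fst b0) hBend b0 hb0).1 rfl

lemma cross_tree [Fintype E] [DecidableEq E] (hbi : G.Biconnected)
    (hloopless : ∀ e : E, ¬ G.IsLoop e) {a b : E} (hab : a ≠ b) {v : V}
    (hav : G.fst a = v ∨ G.snd a = v) (hbv : G.fst b = v ∨ G.snd b = v) :
    ∃ T : Finset E, G.IsSpanningTree T ∧ a ∈ T ∧ b ∉ T ∧
      G.IsSpanningTree (insert b (T.erase a)) := by
  classical
  obtain ⟨u, hu_ne, hua⟩ : ∃ u, u ≠ v ∧
      ((G.fst a = u ∧ G.snd a = v) ∨ (G.fst a = v ∧ G.snd a = u)) := by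
    rcases hav with h | h
    · exact ⟨G.snd a, fun hc => hloopless a (h.trans hc.symm), Or.inr ⟨h, rfl⟩⟩
    · exact ⟨G.fst a, fun hc => hloopless a (hc.trans h.symm), Or.inl ⟨rfl, h⟩⟩
  obtain ⟨w, hw_ne, hwb⟩ : ∃ w, w ≠ v ∧
      ((G.fst b = w ∧ G.snd b = v) ∨ (G.fst b = v ∧ G.snd b = w)) := by
    rcases hbv with h | h
    · exact ⟨G.snd b, fun hc => hloopless b (h.trans hc.symm), Or.inr ⟨h, rfl⟩⟩
    · exact ⟨G.fst b, fun hc => hloopless b (hc.trans h.symm), Or.inl ⟨rfl, h⟩⟩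
  set Sv : Finset E := insert a (Finset.univ.filter fun g => G.fst g ≠ v ∧ G.snd g ≠ v)
    with hSvdef
  have hadj_vu : G.Adj ↑Sv v u := by
    refine ⟨a, by simp [hSvdef], ?_⟩
    rcases hua with ⟨h1, h2⟩ | ⟨h1, h2⟩
    · exact Or.inr ⟨h1, h2⟩
    · exact Or.inl ⟨h1, h2⟩
  have tox : ∀ x : V, ReflTransGen (G.Adj ↑Sv) x u := by
    intro x
    by_cases hx : x = v
    · subst hx
      exact ReflTransGen.single hadj_vu
    · have hch := hbi.2 v x u hx hu_ne
      refine ReflTransGen.mono ?_ _ _ hch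
      rintro p q ⟨hp, hq, g, -, hg⟩
      refine ⟨g, ?_, hg⟩
      have hgv : G.fst g ≠ v ∧ G.snd g ≠ v := by
        rcases hg with ⟨h1, h2⟩ | ⟨h1, h2⟩
        · exact ⟨h1.symm ▸ hp, h2.symm ▸ hq⟩
        · exact ⟨h1.symm ▸ hq, h2.symm ▸ hp⟩
      simp [hSvdef, hgv.1, hgv.2]
  have hSvconn : G.ConnOn ↑Sv := fun p q => (tox p).trans (conn_symm (tox q))
  obtain ⟨T, hTsub, hT⟩ := exists_tree (G := G) Sv hSvconn
  have hTavoid : ∀ g ∈ T, g ≠ a → G.fst g ≠ v ∧ G.snd g ≠ v := by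
    intro g hg hga
    have := hTsub hg
    simp only [hSvdef, Finset.mem_insert, Finset.mem_filter, Finset.mem_univ,
      true_and] at this
    tauto
  have haT : a ∈ T := by
    by_contra haT
    have hiso : ∀ g ∈ (↑T : Set E), G.fst g ≠ v ∧ G.snd g ≠ v := by
      intro g hg
      exact hTavoid g hg (fun hc => haT (hc ▸ hg))
    have hvu := hT.1 v u
    exact hu_ne (isolated hiso hvu).symm
  have hbT : b ∉ T := by
    intro hbT
    have := hTsub hbT
    simp only [hSvdef, Finset.mem_insert, Finset.mem_filter, Finset.mem_univ,
      true_and] at this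
    rcases this with rfl | hthis
    · exact hab rfl
    · rcases hbv with h | h
      · exact hthis.1 h
      · exact hthis.2 h
  have hbz : b ∉ T.erase a := fun hc => hbT (Finset.mem_of_mem_erase hc)
  have hTv : ∀ g ∈ (↑T \ {a} : Set E), G.fst g ≠ v ∧ G.snd g ≠ v := by
    rintro g ⟨hg, hga⟩
    exact hTavoid g hg hga
  have c1 : ∀ x : V, x ≠ v → ReflTransGen (G.Adj (↑T \ {a})) x u := by
    intro x hx
    have hchain := hT.1 x u
    have hud : u = G.fst a ∨ u = G.snd a := by
      rcases hua with ⟨h1, h2⟩ | ⟨h1, h2⟩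
      · exact Or.inl h1.symm
      · exact Or.inr h2.symm
    have hs := sides (G := G) (e := a) hchain hud
    rcases hua with ⟨h1, h2⟩ | ⟨h1, h2⟩
    · rcases hs with hs | hs
      · exact h1 ▸ hs
      · exact absurd (isolated hTv (conn_symm (h2 ▸ hs))).symm hx
    · rcases hs with hs | hs
      · exact absurd (isolated hTv (conn_symm (h1 ▸ hs))).symm hx
      · exact h2 ▸ hs
  set T' : Finset E := insert b (T.erase a) with hT'def
  have hsub' : (↑T \ {a} : Set E) ⊆ ↑T' := by
    rintro g ⟨hg, hga⟩
    simp only [hT'def, Finset.coe_insert, Set.mem_insert_iff, Finset.coe_erase,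
      Set.mem_diff, Finset.mem_coe]
    exact Or.inr ⟨hg, hga⟩
  have hadj_vw : G.Adj ↑T' v w := by
    refine ⟨b, by simp [hT'def], ?_⟩
    rcases hwb with ⟨h1, h2⟩ | ⟨h1, h2⟩
    · exact Or.inr ⟨h1, h2⟩
    · exact Or.inl ⟨h1, h2⟩
  have tox' : ∀ x : V, ReflTransGen (G.Adj ↑T') x u := by
    intro x
    by_cases hx : x = v
    · subst hx
      exact ReflTransGen.head hadj_vw (conn_mono hsub' (c1 w hw_ne))
    · exact conn_mono hsub' (c1 x hx)
  have hT'conn : G.ConnOn ↑T' := fun p q => (tox' p).trans (conn_symm (tox' q))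
  refine ⟨T, hT, haT, hbT, hT'conn, ?_⟩
  intro z hz
  rcases Finset.mem_insert.mp hz with rfl | hz'
  · rw [Finset.erase_insert hbz]
    intro hcc
    have h2 := hcc v u
    rw [Finset.coe_erase] at h2
    exact hu_ne (isolated hTv h2).symm
  · have hzT : z ∈ T := Finset.mem_of_mem_erase hz'
    have hza : z ≠ a := Finset.ne_of_mem_erase hz'
    have hzb : z ≠ b := fun h => hbT (h ▸ hzT)
    intro hcc
    have herase : T'.erase z = insert b ((T.erase a).erase z) := by
      rw [hT'def, Finset.erase_insert_of_ne (Ne.symm hzb)]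
    have hchain := hcc (G.fst z) (G.snd z)
    rw [herase, Finset.coe_insert] at hchain
    have hz_ends := hTavoid z hzT hza
    have hSz : ∀ g ∈ (↑((T.erase a).erase z) : Set E), G.fst g ≠ v ∧ G.snd g ≠ v := by
      intro g hg
      rw [Finset.mem_coe] at hg
      exact hTavoid g (Finset.mem_of_mem_erase (Finset.mem_of_mem_erase hg))
        (Finset.ne_of_mem_erase (Finset.mem_of_mem_erase hg))
    have hcol := collapse (G := G) (Ne.symm hw_ne) (Or.symm hwb) hSz hchain
      hz_ends.1 hz_ends.2
    have hsubz : (↑((T.erase a).erase z) : Set E) ⊆ (↑T \ {z} : Set E) := by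
      intro g hg
      rw [Finset.mem_coe] at hg
      exact ⟨Finset.mem_of_mem_erase (Finset.mem_of_mem_erase hg),
        Finset.ne_of_mem_erase hg⟩
    exact tree_sep hT hzT (conn_mono hsubz hcol)

end Multigraph
namespace Multigraph

open Relation MvPolynomial

variable {V E : Type} {G : Multigraph V E}

noncomputable def indic [DecidableEq E] (s : Finset E) : E →₀ ℕ :=
  ∑ e ∈ s, Finsupp.single e 1

lemma indic_apply [DecidableEq E] (s : Finset E) (e : E) :
    indic s e = if e ∈ s then 1 else 0 := by
  classical
  rw [indic, Finsupp.finset_sum_apply]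
  simp [Finsupp.single_apply]

lemma indic_inj [DecidableEq E] {s t : Finset E} (h : indic s = indic t) : s = t := by
  ext e
  have h' := DFunLike.congr_fun h e
  rw [indic_apply, indic_apply] at h'
  by_cases hs : e ∈ s <;> by_cases ht : e ∈ t
  · simp [hs, ht]
  · rw [if_pos hs, if_neg ht] at h'
    exact absurd h' one_ne_zero
  · rw [if_neg hs, if_pos ht] at h'
    exact absurd h'.symm one_ne_zero
  · simp [hs, ht]

lemma indic_union [DecidableEq E] {s t : Finset E} (h : Disjoint s t) :
    indic (s ∪ t) = indic s + indic t := by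
  ext e
  rw [Finsupp.add_apply, indic_apply, indic_apply, indic_apply]
  by_cases hs : e ∈ s <;> by_cases ht : e ∈ t
  · exact absurd ht (Finset.disjoint_left.mp h hs)
  · simp [hs, ht, Finset.mem_union]
  · simp [hs, ht, Finset.mem_union]
  · simp [hs, ht, Finset.mem_union]

lemma prod_X_eq [DecidableEq E] (s : Finset E) :
    (∏ e ∈ s, (X e : MvPolynomial E ℚ)) = monomial (indic s) 1 := by
  have hsupp : (indic s).support = s := by
    ext e
    rw [Finsupp.mem_support_iff, indic_apply]
    by_cases h : e ∈ s <;> simp [h]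
  have : (monomial (indic s) (1 : ℚ)) = ∏ e ∈ s, X e := by
    rw [monic_monomial_eq, Finsupp.prod, hsupp]
    exact Finset.prod_congr rfl fun e he => by rw [indic_apply, if_pos he, pow_one]
  exact this.symm

open Classical in
lemma kirchhoff_eq [Fintype E] [DecidableEq E] (G : Multigraph V E) :
    G.kirchhoff = ∑ T : Finset E,
      if G.IsSpanningTree T then monomial (indic Tᶜ) (1 : ℚ) else 0 := by
  rw [kirchhoff]
  refine Finset.sum_congr rfl fun T _ => ?_
  by_cases h : G.IsSpanningTree T
  · rw [if_pos h, if_pos h, prod_X_eq]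
  · rw [if_neg h, if_neg h]

lemma coeff_kirchhoff_tree [Fintype E] [DecidableEq E] {T : Finset E}
    (hT : G.IsSpanningTree T) : coeff (indic Tᶜ) G.kirchhoff = 1 := by
  classical
  rw [kirchhoff_eq, MvPolynomial.coeff_sum]
  rw [Finset.sum_eq_single T]
  · simp [hT, coeff_monomial]
  · intro T' _ hne
    by_cases h : G.IsSpanningTree T'
    · simp only [h, if_true, coeff_monomial, ite_eq_right_iff]
      intro habs
      exact absurd (compl_inj_iff.mp (indic_inj habs)) hne
    · simp [h]
  · intro h
    exact absurd (Finset.mem_univ T) h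

lemma mem_support_kirchhoff [Fintype E] [DecidableEq E] {d : E →₀ ℕ}
    (h : coeff d G.kirchhoff ≠ 0) : ∃ T, G.IsSpanningTree T ∧ indic Tᶜ = d := by
  classical
  by_contra hcon
  push_neg at hcon
  apply h
  rw [kirchhoff_eq, MvPolynomial.coeff_sum]
  refine Finset.sum_eq_zero fun T _ => ?_
  by_cases hT : G.IsSpanningTree T
  · simp [hT, coeff_monomial, hcon T hT]
  · simp [hT]

lemma degreeOf_kirchhoff_le [Fintype E] [DecidableEq E] (e : E) :
    degreeOf e G.kirchhoff ≤ 1 := by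
  rw [MvPolynomial.degreeOf_le_iff]
  intro m hm
  obtain ⟨T, hT, rfl⟩ := mem_support_kirchhoff (G := G)
    (MvPolynomial.mem_support_iff.mp hm)
  rw [indic_apply]
  split <;> simp

lemma degreeOf_kirchhoff_pos [Fintype E] [DecidableEq E] {T : Finset E}
    (hT : G.IsSpanningTree T) {e : E} (he : e ∉ T) : 1 ≤ degreeOf e G.kirchhoff := by
  rw [MvPolynomial.degreeOf_eq_sup]
  have hmem : indic Tᶜ ∈ G.kirchhoff.support :=
    MvPolynomial.mem_support_iff.mpr (by rw [coeff_kirchhoff_tree hT]; norm_num)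
  have hle := Finset.le_sup (f := fun m : E →₀ ℕ => m e) hmem
  have h1 : (1 : ℕ) ≤ indic Tᶜ e := by
    rw [indic_apply, if_pos (Finset.mem_compl.mpr he)]
  exact le_trans h1 hle

lemma degreeOf_mul_eq_domain {σ : Type} [Fintype σ] [Nonempty σ] (i : σ)
    (f g : MvPolynomial σ ℚ) (hf : f ≠ 0) (hg : g ≠ 0) :
    degreeOf i (f * g) = degreeOf i f + degreeOf i g := by
  classical
  obtain ⟨n, hn⟩ : ∃ n, Fintype.card σ = n + 1 :=
    ⟨Fintype.card σ - 1, (Nat.succ_pred_eq_of_pos Fintype.card_pos).symm⟩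
  let e₀ : σ ≃ Fin (n + 1) := Fintype.equivFinOfCardEq hn
  let e : σ ≃ Fin (n + 1) := e₀.trans (Equiv.swap (e₀ i) 0)
  have hei : e i = 0 := by simp [e, Equiv.swap_apply_left]
  have hrename : ∀ p : MvPolynomial σ ℚ,
      degreeOf i p = (finSuccEquiv ℚ n (rename (⇑e) p)).natDegree := by
    intro p
    rw [natDegree_finSuccEquiv, ← hei, degreeOf_rename_of_injective e.injective]
  have hf1 : rename (⇑e) f ≠ 0 := fun h =>
    hf ((rename_injective _ e.injective) (by simpa using h))
  have hg1 : rename (⇑e) g ≠ 0 := fun h =>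
    hg ((rename_injective _ e.injective) (by simpa using h))
  have hf2 : finSuccEquiv ℚ n (rename (⇑e) f) ≠ 0 := fun h =>
    hf1 ((finSuccEquiv ℚ n).injective (by simpa using h))
  have hg2 : finSuccEquiv ℚ n (rename (⇑e) g) ≠ 0 := fun h =>
    hg1 ((finSuccEquiv ℚ n).injective (by simpa using h))
  rw [hrename, hrename, hrename, map_mul, map_mul,
    Polynomial.natDegree_mul hf2 hg2]

lemma isUnit_degreeOf_eq_zero {σ : Type} [Fintype σ] [Nonempty σ]
    {f : MvPolynomial σ ℚ} (h : IsUnit f) (i : σ) : degreeOf i f = 0 := by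
  obtain ⟨w, hw⟩ := isUnit_iff_exists_inv.mp h
  have hf : f ≠ 0 := fun hc => by simp [hc] at hw
  have hw0 : w ≠ 0 := fun hc => by simp [hc] at hw
  have := degreeOf_mul_eq_domain i f w hf hw0
  rw [hw] at this
  rw [show (1 : MvPolynomial σ ℚ) = C 1 from (map_one C).symm, degreeOf_C] at this
  omega

lemma exists_degreeOf_ne_zero {σ : Type} {f : MvPolynomial σ ℚ}
    (hf : f ≠ 0) (hunit : ¬ IsUnit f) : ∃ i, degreeOf i f ≠ 0 := by
  classical
  by_contra h
  push_neg at h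
  apply hunit
  have hsupp : ∀ m ∈ f.support, m = (0 : σ →₀ ℕ) := by
    intro m hm
    ext i
    have h1 : m i ≤ degreeOf i f := by
      rw [MvPolynomial.degreeOf_eq_sup]
      exact Finset.le_sup (f := fun m : σ →₀ ℕ => m i) hm
    rw [h i] at h1
    simpa using h1
  have hss : f.support ⊆ {0} := fun m hm => Finset.mem_singleton.mpr (hsupp m hm)
  rcases Finset.subset_singleton_iff.mp hss with h0 | h0
  · exact absurd (MvPolynomial.support_eq_empty.mp h0) hf
  · have hfC : f = C (coeff 0 f) := by
      conv_lhs => rw [MvPolynomial.as_sum f]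
      rw [h0, Finset.sum_singleton, MvPolynomial.monomial_zero']
    have hc0 : coeff 0 f ≠ 0 := fun hc => hf (by rw [hfC, hc, map_zero])
    set c := coeff 0 f with hcdef
    refine IsUnit.of_mul_eq_one (a := f) (C c⁻¹) ?_
    rw [hfC, ← map_mul, mul_inv_cancel₀ hc0, map_one]

lemma coeff_mul_disjoint [DecidableEq E] {A : Finset E} {F H : MvPolynomial E ℚ}
    (hF : ∀ m ∈ F.support, ∀ e ∉ A, m e = 0)
    (hH : ∀ m ∈ H.support, ∀ e ∈ A, m e = 0)
    {d₁ d₂ : E →₀ ℕ} (h₁ : ∀ e ∉ A, d₁ e = 0) (h₂ : ∀ e ∈ A, d₂ e = 0) :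
    coeff (d₁ + d₂) (F * H) = coeff d₁ F * coeff d₂ H := by
  rw [MvPolynomial.coeff_mul]
  refine Finset.sum_eq_single (d₁, d₂) ?_ ?_
  · rintro ⟨m₁, m₂⟩ hmem hne
    by_cases c₁ : coeff m₁ F = 0
    · simp [c₁]
    by_cases c₂ : coeff m₂ H = 0
    · simp [c₂]
    exfalso
    apply hne
    have hm : m₁ + m₂ = d₁ + d₂ := Finset.HasAntidiagonal.mem_antidiagonal.mp hmem
    have hm₁ : ∀ e ∉ A, m₁ e = 0 := hF m₁ (MvPolynomial.mem_support_iff.mpr c₁)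
    have hm₂ : ∀ e ∈ A, m₂ e = 0 := hH m₂ (MvPolynomial.mem_support_iff.mpr c₂)
    have he1 : m₁ = d₁ := by
      ext e
      have happ : m₁ e + m₂ e = d₁ e + d₂ e := by
        have := DFunLike.congr_fun hm e
        simpa using this
      by_cases he : e ∈ A
      · rw [hm₂ e he, h₂ e he] at happ
        simpa using happ
      · rw [hm₁ e he, h₁ e he]
    have he2 : m₂ = d₂ := by
      have := hm
      rw [he1] at this
      exact add_left_cancel this
    rw [he1, he2]
  · intro h
    simp at h

end Multigraph
set_option maxHeartbeats 2000000 in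
open Multigraph MvPolynomial in
/-- The Kirchhoff polynomial of a biconnected loopless multigraph other than
`K₂` (which, being loopless and biconnected, means it has an edge and more than
one edge) is irreducible over ℚ and non-constant in every edge variable. -/
theorem kirchhoff_biconnected_irreducible {V E : Type} [Fintype E] [DecidableEq E]
    (G : Multigraph V E) (hbi : G.Biconnected)
    (hloopless : ∀ e : E, ¬ G.IsLoop e)
    (hEdge : Nonempty E) (hK2 : Fintype.card E ≠ 1) :
    Irreducible G.kirchhoff ∧ ∀ e : E, G.kirchhoff.degreeOf e ≠ 0 := by
  classical
  haveI : Nonempty E := hEdge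
  have hcard : 1 < Fintype.card E := by
    have : 0 < Fintype.card E := Fintype.card_pos
    omega
  have hnb : ∀ e : E, G.ConnOn {e' : E | e' ≠ e} := not_bridge hbi hloopless hcard
  have htree_avoid : ∀ e : E, ∃ T, G.IsSpanningTree T ∧ e ∉ T := by
    intro e
    have hcoe : (↑(Finset.univ.erase e) : Set E) = {e' : E | e' ≠ e} := by
      ext g; simp
    obtain ⟨T, hsub, hT⟩ := exists_tree (G := G) (Finset.univ.erase e)
      (by rw [hcoe]; exact hnb e)
    refine ⟨T, hT, fun he => ?_⟩
    have := hsub he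
    simp at this
  have hdegpos : ∀ e : E, 1 ≤ degreeOf e G.kirchhoff := by
    intro e
    obtain ⟨T, hT, he⟩ := htree_avoid e
    exact degreeOf_kirchhoff_pos hT he
  have hdegle : ∀ e : E, degreeOf e G.kirchhoff ≤ 1 :=
    fun e => degreeOf_kirchhoff_le (G := G) e
  have hPsine : G.kirchhoff ≠ 0 := by
    obtain ⟨T, hT, -⟩ := htree_avoid (Classical.arbitrary E)
    intro hc
    have := coeff_kirchhoff_tree (G := G) hT
    rw [hc] at this
    simp at this
  refine ⟨⟨?_, ?_⟩, fun e => by have := hdegpos e; omega⟩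
  · intro hu
    have h1 := isUnit_degreeOf_eq_zero hu (Classical.arbitrary E)
    have h2 := hdegpos (Classical.arbitrary E)
    omega
  · intro F H hFH
    by_contra hcon
    push_neg at hcon
    obtain ⟨hFnu, hHnu⟩ := hcon
    have hFne : F ≠ 0 := fun hc => hPsine (by rw [hFH, hc, zero_mul])
    have hHne : H ≠ 0 := fun hc => hPsine (by rw [hFH, hc, mul_zero])
    set A : Finset E := Finset.univ.filter (fun e => degreeOf e F ≠ 0) with hAdef
    have hmemA : ∀ e : E, e ∈ A ↔ degreeOf e F ≠ 0 := by
      intro e; simp [hAdef]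
    have hdegsum : ∀ e : E, degreeOf e F + degreeOf e H = degreeOf e G.kirchhoff := by
      intro e; rw [hFH, degreeOf_mul_eq_domain e F H hFne hHne]
    have hHA : ∀ e ∈ A, degreeOf e H = 0 := by
      intro e he
      have h1 := (hmemA e).mp he
      have h2 := hdegsum e
      have h3 := hdegle e
      omega
    have hFnotA : ∀ e, e ∉ A → degreeOf e F = 0 := by
      intro e he
      by_contra hc
      exact he ((hmemA e).mpr hc)
    have hFsupp : ∀ m ∈ F.support, ∀ e ∉ A, m e = 0 := by
      intro m hm e he
      have h1 : m e ≤ degreeOf e F := by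
        rw [MvPolynomial.degreeOf_eq_sup]
        exact Finset.le_sup (f := fun m : E →₀ ℕ => m e) hm
      rw [hFnotA e he] at h1
      omega
    have hHsupp : ∀ m ∈ H.support, ∀ e ∈ A, m e = 0 := by
      intro m hm e he
      have h1 : m e ≤ degreeOf e H := by
        rw [MvPolynomial.degreeOf_eq_sup]
        exact Finset.le_sup (f := fun m : E →₀ ℕ => m e) hm
      rw [hHA e he] at h1
      omega
    have hd1cond : ∀ s : Finset E, ∀ e ∉ A, indic (s ∩ A) e = 0 := by
      intro s e he
      rw [indic_apply, if_neg (fun hc => he (Finset.mem_inter.mp hc).2)]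
    have hd2cond : ∀ s : Finset E, ∀ e ∈ A, indic (s ∩ Aᶜ) e = 0 := by
      intro s e he
      rw [indic_apply, if_neg (fun hc =>
        Finset.mem_compl.mp (Finset.mem_inter.mp hc).2 he)]
    have hdisj : ∀ s : Finset E, Disjoint (s ∩ A) (s ∩ Aᶜ) := by
      intro s
      refine Finset.disjoint_left.mpr ?_
      intro g hg1 hg2
      exact Finset.mem_compl.mp (Finset.mem_inter.mp hg2).2 (Finset.mem_inter.mp hg1).2
    have hsplit : ∀ s : Finset E, indic s = indic (s ∩ A) + indic (s ∩ Aᶜ) := by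
      intro s
      rw [← indic_union (hdisj s), ← Finset.inter_union_distrib_left,
        Finset.union_compl, Finset.inter_univ]
    have htreeSplit : ∀ T : Finset E, G.IsSpanningTree T →
        coeff (indic (Tᶜ ∩ A)) F * coeff (indic (Tᶜ ∩ Aᶜ)) H = 1 := by
      intro T hT
      have h1 := coeff_kirchhoff_tree (G := G) hT
      rw [hsplit Tᶜ, hFH] at h1
      rw [← h1]
      exact (coeff_mul_disjoint hFsupp hHsupp (hd1cond Tᶜ) (hd2cond Tᶜ)).symm
    obtain ⟨a0, ha0⟩ := exists_degreeOf_ne_zero hFne hFnu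
    obtain ⟨b0, hb0⟩ := exists_degreeOf_ne_zero hHne hHnu
    have ha0A : a0 ∈ A := (hmemA a0).mpr ha0
    have hb0A : b0 ∉ A := fun hc => hb0 (hHA b0 hc)
    obtain ⟨v, a, b, haA, hbA, hav, hbv⟩ := exists_mixed (G := G) hbi.1 ha0A hb0A
    have hab : a ≠ b := fun hc => hbA (hc ▸ haA)
    obtain ⟨T, hT, haT, hbT, hT'⟩ := cross_tree hbi hloopless hab hav hbv
    set T' : Finset E := insert b (T.erase a) with hT'def
    have cF : coeff (indic (Tᶜ ∩ A)) F ≠ 0 :=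
      left_ne_zero_of_mul_eq_one (htreeSplit T hT)
    have cH : coeff (indic (T'ᶜ ∩ Aᶜ)) H ≠ 0 :=
      right_ne_zero_of_mul_eq_one (htreeSplit T' hT')
    have hdisj2 : Disjoint (Tᶜ ∩ A) (T'ᶜ ∩ Aᶜ) := by
      refine Finset.disjoint_left.mpr ?_
      intro g hg1 hg2
      exact Finset.mem_compl.mp (Finset.mem_inter.mp hg2).2 (Finset.mem_inter.mp hg1).2
    have hcoeffmix : coeff (indic (Tᶜ ∩ A) + indic (T'ᶜ ∩ Aᶜ)) G.kirchhoff ≠ 0 := by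
      rw [hFH, coeff_mul_disjoint hFsupp hHsupp (hd1cond Tᶜ) (hd2cond T'ᶜ)]
      exact mul_ne_zero cF cH
    obtain ⟨U, hU, hUeq⟩ := mem_support_kirchhoff hcoeffmix
    rw [← indic_union hdisj2] at hUeq
    have hUc : Uᶜ = (Tᶜ ∩ A) ∪ (T'ᶜ ∩ Aᶜ) := indic_inj hUeq
    have hcompl : (Tᶜ ∩ A) ∪ (T'ᶜ ∩ Aᶜ) = (insert b T)ᶜ := by
      ext e
      by_cases heA : e ∈ A
      · have heb : e ≠ b := fun h => hbA (h ▸ heA)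
        simp only [Finset.mem_union, Finset.mem_inter, Finset.mem_compl, hT'def,
          Finset.mem_insert, Finset.mem_erase, heA, heb, and_true, not_false_iff,
          or_false, false_or, not_or]
        tauto
      · have hea : e ≠ a := fun h => heA (h ▸ haA)
        simp only [Finset.mem_union, Finset.mem_inter, Finset.mem_compl, hT'def,
          Finset.mem_insert, Finset.mem_erase, heA, hea, and_true, and_false,
          not_false_iff, or_false, false_or, not_or]
        tauto
    have hUins : U = insert b T := by
      refine compl_inj_iff.mp ?_
      rw [hUc, hcompl]
    have hbadT := hU.2 b (by rw [hUins]; exact Finset.mem_insert_self b T)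
    rw [hUins, Finset.erase_insert hbT] at hbadT
    exact hbadT hT.1
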